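/- Let d ≥ 3 be odd and let k be an integer with 1 ≤ k < (d−1)/2. There is a constant c > 0 (depending only on d and k) such that for every odd prime power q and every r ∈ 𝔽_q^*, there are sets X, Y ⊆ 𝔽_q^d with |X| ≥ c·q^{d−k}, |Y| = q^{k+1} − q^k, and ‖x − y‖ ≠ r for every x ∈ X and y ∈ Y. -/

import Mathlib

/-- The "distance" quadratic form on `F^d`: `‖x‖ = x₁² + ⋯ + x_d²`. -/
def fnorm {F : Type*} [CommRing F] {d : ℕ} (x : Fin d → F) : F := ∑ i, (x i) ^ 2

open Finset
section
variable {F : Type} [Field F] {d : ℕ}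

def dotp (x y : Fin d → F) : F := ∑ i, x i * y i

lemma dotp_comm (x y : Fin d → F) : dotp x y = dotp y x := by
  unfold dotp; exact Finset.sum_congr rfl fun i _ => mul_comm _ _

lemma dotp_add_left (x x' y : Fin d → F) : dotp (x + x') y = dotp x y + dotp x' y := by
  unfold dotp; rw [← Finset.sum_add_distrib]; exact Finset.sum_congr rfl fun i _ => by
    simp [add_mul]

lemma dotp_add_right (x y y' : Fin d → F) : dotp x (y + y') = dotp x y + dotp x y' := by
  rw [dotp_comm, dotp_add_left, dotp_comm y x, dotp_comm y' x]

lemma dotp_smul_left (c : F) (x y : Fin d → F) : dotp (c • x) y = c * dotp x y := by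
  unfold dotp; rw [Finset.mul_sum]; exact Finset.sum_congr rfl fun i _ => by
    simp [mul_assoc]

lemma dotp_smul_right (c : F) (x y : Fin d → F) : dotp x (c • y) = c * dotp x y := by
  rw [dotp_comm, dotp_smul_left, dotp_comm]

lemma dotp_sum_left {ι : Type*} (s : Finset ι) (f : ι → Fin d → F) (y : Fin d → F) :
    dotp (∑ j ∈ s, f j) y = ∑ j ∈ s, dotp (f j) y := by
  unfold dotp
  rw [Finset.sum_comm]
  refine Finset.sum_congr rfl fun i _ => ?_
  simp [Finset.sum_mul]

lemma dotp_sum_right {ι : Type*} (s : Finset ι) (f : ι → Fin d → F) (x : Fin d → F) :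
    dotp x (∑ j ∈ s, f j) = ∑ j ∈ s, dotp x (f j) := by
  rw [dotp_comm, dotp_sum_left]; exact Finset.sum_congr rfl fun j _ => dotp_comm _ _

lemma fnorm_eq_dotp (x : Fin d → F) : fnorm x = dotp x x := by
  unfold fnorm dotp; exact Finset.sum_congr rfl fun i _ => sq (x i) ▸ by ring

def sv (d : ℕ) (n : ℕ) (a : F) : Fin d → F := fun i => if (i : ℕ) = n then a else 0

lemma dotp_sv_sv (n m : ℕ) (a c : F) :
    dotp (sv d n a) (sv d m c) = if n = m ∧ n < d then a * c else 0 := by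
  unfold dotp sv
  by_cases hn : n < d
  · rw [Finset.sum_eq_single (⟨n, hn⟩ : Fin d)]
    · simp only [Fin.val_mk]
      by_cases h : n = m
      · subst h; simp [hn]
      · simp [h]
    · intro i _ hi
      have : (i : ℕ) ≠ n := fun h => hi (Fin.ext h)
      simp [this]
    · simp
  · rw [Finset.sum_eq_zero]
    · simp [hn]
    · intro i _
      have : (i : ℕ) ≠ n := by omega
      simp [this]

end

open Finset

section CharCount
variable {F : Type} [Field F] [Fintype F] [DecidableEq F]

lemma card_sqrts (hF : ringChar F ≠ 2) (e : F) :
    (((univ : Finset F).filter fun y : F => y ^ 2 = e).card : ℤ) = quadraticChar F e + 1 := by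
  have h := quadraticChar_card_sqrts hF e
  rw [← h]
  congr 1
  rw [Set.toFinset_setOf]

lemma sum_char_affine (hF : ringChar F ≠ 2) (c e : F) (he : e ≠ 0) :
    ∑ x : F, quadraticChar F (c + e * x) = 0 := by
  rw [← quadraticChar_sum_zero hF]
  exact Fintype.sum_bijective (fun x : F => c + e * x)
    ((Equiv.addLeft c).bijective.comp (Equiv.mulLeft₀ e he).bijective)
    _ _ (fun x => rfl)

lemma sum_char_quadratic (hF : ringChar F ≠ 2) (c e : F) (hc : c ≠ 0) (he : e ≠ 0) :
    ∑ x : F, quadraticChar F (c + e * x ^ 2) = - quadraticChar F e := by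
  classical
  have step1 : ∑ x : F, quadraticChar F (c + e * x ^ 2)
      = ∑ u : F, (((univ : Finset F).filter fun x : F => x ^ 2 = u).card : ℤ)
          * quadraticChar F (c + e * u) := by
    rw [← Finset.sum_fiberwise_of_maps_to (fun x _ => mem_univ (x ^ 2))
      (fun x => quadraticChar F (c + e * x ^ 2))]
    refine Finset.sum_congr rfl fun u _ => ?_
    have : ∀ x ∈ (univ : Finset F).filter (fun x : F => x ^ 2 = u),
        quadraticChar F (c + e * x ^ 2) = quadraticChar F (c + e * u) := by
      intro x hx
      simp only [mem_filter] at hx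
      rw [hx.2]
    rw [Finset.sum_congr rfl this, Finset.sum_const, nsmul_eq_mul]
  have step2 : ∑ u : F, (((univ : Finset F).filter fun x : F => x ^ 2 = u).card : ℤ)
          * quadraticChar F (c + e * u)
      = ∑ u : F, quadraticChar F u * quadraticChar F (c + e * u)
        + ∑ u : F, quadraticChar F (c + e * u) := by
    rw [← Finset.sum_add_distrib]
    refine Finset.sum_congr rfl fun u _ => ?_
    rw [card_sqrts hF u]; ring
  have step3 : ∑ u : F, quadraticChar F u * quadraticChar F (c + e * u)
      = - quadraticChar F e := by
    have h0 : ∑ u : F, quadraticChar F (c * u + e * u ^ 2)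
        = ∑ u ∈ (univ : Finset F).erase 0, quadraticChar F (c * u + e * u ^ 2) := by
      rw [← Finset.sum_erase_add _ _ (mem_univ (0 : F))]
      simp
    have h1 : ∀ u : F, u ≠ 0 →
        quadraticChar F (c * u + e * u ^ 2) = quadraticChar F (c * u⁻¹ + e) := by
      intro u hu
      have harg : c * u + e * u ^ 2 = u ^ 2 * (c * u⁻¹ + e) := by
        field_simp
      rw [harg, map_mul, quadraticChar_sq_one' hu, one_mul]
    have h2 : ∑ u ∈ (univ : Finset F).erase 0, quadraticChar F (c * u⁻¹ + e)
        = ∑ u ∈ (univ : Finset F).erase 0, quadraticChar F (c * u + e) := by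
      refine Finset.sum_nbij' (fun u => u⁻¹) (fun u => u⁻¹) ?_ ?_ ?_ ?_ ?_
      · intro u hu; simp only [mem_erase, mem_univ, and_true] at hu ⊢; exact inv_ne_zero hu
      · intro u hu; simp only [mem_erase, mem_univ, and_true] at hu ⊢; exact inv_ne_zero hu
      · intro u hu; exact inv_inv u
      · intro u hu; exact inv_inv u
      · intro u hu; simp [inv_inv]
    have h3 : ∑ u ∈ (univ : Finset F).erase 0, quadraticChar F (c * u + e)
        = - quadraticChar F e := by
      have := Finset.sum_erase_add (univ : Finset F)
        (fun u => quadraticChar F (c * u + e)) (mem_univ (0 : F))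
      have hall : ∑ u : F, quadraticChar F (c * u + e) = 0 := by
        have := sum_char_affine hF e c hc
        rw [← this]
        exact Finset.sum_congr rfl fun u _ => by ring_nf
      rw [hall] at this
      simp only [mul_zero, zero_add] at this
      linarith
    calc ∑ u : F, quadraticChar F u * quadraticChar F (c + e * u)
        = ∑ u : F, quadraticChar F (c * u + e * u ^ 2) := by
          refine Finset.sum_congr rfl fun u _ => ?_
          rw [← map_mul]; congr 1; ring
      _ = ∑ u ∈ (univ : Finset F).erase 0, quadraticChar F (c * u + e * u ^ 2) := h0
      _ = ∑ u ∈ (univ : Finset F).erase 0, quadraticChar F (c * u⁻¹ + e) := by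
          refine Finset.sum_congr rfl fun u hu => ?_
          exact h1 u (by simpa using (mem_erase.mp hu).1)
      _ = ∑ u ∈ (univ : Finset F).erase 0, quadraticChar F (c * u + e) := h2
      _ = - quadraticChar F e := h3
  rw [step1, step2, step3, sum_char_affine hF c e he, add_zero]

end CharCount
section CharCount2
open Finset
variable {F : Type} [Field F] [Fintype F] [DecidableEq F]

lemma card_quadric (hF : ringChar F ≠ 2) (a b t : F) (ha : a ≠ 0) (hb : b ≠ 0) (ht : t ≠ 0) :
    (Fintype.card F : ℤ) - 1
      ≤ (((univ : Finset (F × F)).filter fun p : F × F => a * p.1 ^ 2 + b * p.2 ^ 2 = t).card : ℤ) := by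
  classical
  have key : (((univ : Finset (F × F)).filter fun p : F × F => a * p.1 ^ 2 + b * p.2 ^ 2 = t).card : ℤ)
      = ∑ x : F, (((univ : Finset F).filter fun y : F => y ^ 2 = b⁻¹ * (t - a * x ^ 2)).card : ℤ) := by
    push_cast
    rw [Finset.card_filter, Fintype.sum_prod_type]
    push_cast
    refine Finset.sum_congr rfl fun x _ => ?_
    rw [Finset.card_filter]
    push_cast
    refine Finset.sum_congr rfl fun y _ => ?_
    congr 1
    have : (a * x ^ 2 + b * y ^ 2 = t) ↔ (y ^ 2 = b⁻¹ * (t - a * x ^ 2)) := by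
      rw [inv_mul_eq_div, eq_div_iff hb]
      constructor <;> intro h <;> linear_combination h
    simp [this]
  rw [key]
  have key2 : ∑ x : F, (((univ : Finset F).filter fun y : F => y ^ 2 = b⁻¹ * (t - a * x ^ 2)).card : ℤ)
      = (Fintype.card F : ℤ) + ∑ x : F, quadraticChar F (b⁻¹ * t + (-(b⁻¹ * a)) * x ^ 2) := by
    calc ∑ x : F, (((univ : Finset F).filter fun y : F => y ^ 2 = b⁻¹ * (t - a * x ^ 2)).card : ℤ)
        = ∑ x : F, (quadraticChar F (b⁻¹ * (t - a * x ^ 2)) + 1) :=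
          Finset.sum_congr rfl fun x _ => card_sqrts hF _
      _ = (∑ x : F, quadraticChar F (b⁻¹ * (t - a * x ^ 2))) + (Fintype.card F : ℤ) := by
          rw [Finset.sum_add_distrib, Finset.sum_const, card_univ]; simp
      _ = (Fintype.card F : ℤ) + ∑ x : F, quadraticChar F (b⁻¹ * t + (-(b⁻¹ * a)) * x ^ 2) := by
          rw [add_comm]; congr 1
          exact Finset.sum_congr rfl fun x _ => by congr 1; ring
  rw [key2, sum_char_quadratic hF _ _ (by simp [hb, ht]) (by simp [hb, ha])]
  have := quadraticChar_dichotomy (F := F) (a := -(b⁻¹ * a)) (by simp [hb, ha])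
  rcases this with h | h <;> rw [h] <;> omega

lemma exists_sq_add_sq' (hF : ringChar F ≠ 2) (t : F) (ht : t ≠ 0) :
    ∃ x y : F, x ^ 2 + y ^ 2 = t := by
  classical
  have h := card_quadric hF 1 1 t one_ne_zero one_ne_zero ht
  have hq : (2 : ℤ) ≤ Fintype.card F := by exact_mod_cast Fintype.one_lt_card
  have : 0 < ((univ : Finset (F × F)).filter fun p : F × F => 1 * p.1 ^ 2 + 1 * p.2 ^ 2 = t).card := by
    omega
  obtain ⟨p, hp⟩ := Finset.card_pos.mp this
  simp only [mem_filter, one_mul] at hp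
  exact ⟨p.1, p.2, hp.2⟩

lemma two_mul_card_nonsquares (hF : ringChar F ≠ 2) :
    2 * ((univ : Finset F).filter fun u : F => ¬ IsSquare u).card = Fintype.card F - 1 := by
  classical
  have hsplit := Finset.sum_filter_add_sum_filter_not (univ : Finset F)
    (fun u : F => IsSquare u) (fun u => quadraticChar F u)
  rw [quadraticChar_sum_zero hF] at hsplit
  have hNS1 : ∀ u ∈ (univ : Finset F).filter (fun u : F => ¬ IsSquare u),
      quadraticChar F u = -1 := fun u hu =>
    quadraticChar_neg_one_iff_not_isSquare.mpr (mem_filter.mp hu).2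
  have hNS : ∑ u ∈ (univ : Finset F).filter (fun u : F => ¬ IsSquare u), quadraticChar F u
      = - (((univ : Finset F).filter fun u : F => ¬ IsSquare u).card : ℤ) := by
    rw [Finset.sum_congr rfl hNS1, Finset.sum_const]; simp
  have h0mem : (0 : F) ∈ (univ : Finset F).filter (fun u : F => IsSquare u) := by
    simp
  have hSQ1 : ∀ u ∈ ((univ : Finset F).filter (fun u : F => IsSquare u)).erase 0,
      quadraticChar F u = 1 := by
    intro u hu
    have hu' := Finset.mem_erase.mp hu
    exact (quadraticChar_one_iff_isSquare hu'.1).mpr (mem_filter.mp hu'.2).2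
  have hSQ : ∑ u ∈ (univ : Finset F).filter (fun u : F => IsSquare u), quadraticChar F u
      = (((univ : Finset F).filter fun u : F => IsSquare u).card : ℤ) - 1 := by
    rw [← Finset.sum_erase_add _ _ h0mem, Finset.sum_congr rfl hSQ1, Finset.sum_const]
    have hpos : 0 < ((univ : Finset F).filter fun u : F => IsSquare u).card :=
      Finset.card_pos.mpr ⟨0, h0mem⟩
    rw [Finset.card_erase_of_mem h0mem, nsmul_eq_mul, mul_one, quadraticChar_zero, add_zero]
    omega
  have hcards := Finset.card_filter_add_card_filter_not (s := (univ : Finset F))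
    (p := fun u : F => IsSquare u)
  rw [hSQ, hNS] at hsplit
  rw [Finset.card_univ] at hcards
  have h2 : 1 ≤ Fintype.card F := Fintype.card_pos
  omega

end CharCount2
section Shapes
open Finset
variable {F : Type} [Field F] {d : ℕ}

def pr2 (d b : ℕ) (x y : F) : Fin d → F := sv d b x + sv d (b+1) y
def tr3 (d b : ℕ) (x y z : F) : Fin d → F := sv d b x + sv d (b+1) y + sv d (b+2) z
def qd (d b : ℕ) (x y z w : F) : Fin d → F := sv d b x + sv d (b+1) y + sv d (b+2) z + sv d (b+3) w

lemma sv_supp {n : ℕ} {a : F} {i : Fin d} (h : (i : ℕ) ≠ n) : sv d n a i = 0 := by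
  simp [sv, h]

lemma pr2_supp {b : ℕ} {x y : F} {i : Fin d} (h : (i : ℕ) < b ∨ b + 1 < (i : ℕ)) :
    pr2 d b x y i = 0 := by
  simp only [pr2, Pi.add_apply]
  rw [sv_supp (by omega), sv_supp (by omega), add_zero]

lemma tr3_supp {b : ℕ} {x y z : F} {i : Fin d} (h : (i : ℕ) < b ∨ b + 2 < (i : ℕ)) :
    tr3 d b x y z i = 0 := by
  simp only [tr3, Pi.add_apply]
  rw [sv_supp (by omega), sv_supp (by omega), sv_supp (by omega)]; ring

lemma qd_supp {b : ℕ} {x y z w : F} {i : Fin d} (h : (i : ℕ) < b ∨ b + 3 < (i : ℕ)) :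
    qd d b x y z w i = 0 := by
  simp only [qd, Pi.add_apply]
  rw [sv_supp (by omega), sv_supp (by omega), sv_supp (by omega), sv_supp (by omega)]; ring

lemma dotp_disjoint {x y : Fin d → F} (h : ∀ i : Fin d, x i = 0 ∨ y i = 0) : dotp x y = 0 := by
  unfold dotp
  exact Finset.sum_eq_zero fun i _ => by rcases h i with h' | h' <;> simp [h']

lemma dotp_pr2_pr2 {b : ℕ} (hb : b + 1 < d) (x y x' y' : F) :
    dotp (pr2 d b x y) (pr2 d b x' y') = x * x' + y * y' := by
  unfold pr2
  simp only [dotp_add_left, dotp_add_right, dotp_sv_sv]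
  have h0 : b < d := by omega
  simp [hb, h0]

lemma dotp_tr3_tr3 {b : ℕ} (hb : b + 2 < d) (x y z x' y' z' : F) :
    dotp (tr3 d b x y z) (tr3 d b x' y' z') = x * x' + y * y' + z * z' := by
  unfold tr3
  simp only [dotp_add_left, dotp_add_right, dotp_sv_sv]
  have h0 : b < d := by omega
  have h1 : b + 1 < d := by omega
  simp [hb, h0, h1]

lemma dotp_qd_qd {b : ℕ} (hb : b + 3 < d) (x y z w x' y' z' w' : F) :
    dotp (qd d b x y z w) (qd d b x' y' z' w') = x * x' + y * y' + z * z' + w * w' := by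
  unfold qd
  simp only [dotp_add_left, dotp_add_right, dotp_sv_sv]
  have h0 : b < d := by omega
  have h1 : b + 1 < d := by omega
  have h2 : b + 2 < d := by omega
  simp [hb, h0, h1, h2]

lemma dotp_qd_sv0 {b : ℕ} (hb : b < d) (x y z w c : F) :
    dotp (qd d b x y z w) (sv d b c) = x * c := by
  unfold qd
  simp only [dotp_add_left, dotp_sv_sv]
  simp [hb]

lemma dotp_qd_sv1 {b : ℕ} (hb : b + 1 < d) (x y z w c : F) :
    dotp (qd d b x y z w) (sv d (b+1) c) = y * c := by
  unfold qd
  simp only [dotp_add_left, dotp_sv_sv]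
  simp [hb]

lemma dotp_qd_sv2 {b : ℕ} (hb : b + 2 < d) (x y z w c : F) :
    dotp (qd d b x y z w) (sv d (b+2) c) = z * c := by
  unfold qd
  simp only [dotp_add_left, dotp_sv_sv]
  simp [hb]

lemma dotp_tr3_sv0 {b : ℕ} (hb : b < d) (x y z c : F) :
    dotp (tr3 d b x y z) (sv d b c) = x * c := by
  unfold tr3
  simp only [dotp_add_left, dotp_sv_sv]
  simp [hb]

lemma dotp_tr3_sv2 {b : ℕ} (hb : b + 2 < d) (x y z c : F) :
    dotp (tr3 d b x y z) (sv d (b+2) c) = z * c := by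
  unfold tr3
  simp only [dotp_add_left, dotp_sv_sv]
  simp [hb]

end Shapes
section Vectors
open Finset
variable {F : Type} [Field F]

/-- the isotropic family `w_j`. -/
def wV (d k : ℕ) (α β : F) (j : ℕ) : Fin d → F :=
  if j % 2 = 0 then
    (if j + 1 = k then tr3 d (4*(j/2)) α β 1 else qd d (4*(j/2)) 1 0 α β)
  else qd d (4*(j/2)) 0 1 (-β) α

def vV (d k : ℕ) (μ ν : F) : Fin d → F := pr2 d (2*k + k % 2) μ ν
def vV' (d k : ℕ) (μ ν : F) : Fin d → F := pr2 d (2*k + k % 2) (-ν) μ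
def pP (d k : ℕ) (α β : F) : Fin d → F :=
  if k % 2 = 1 then tr3 d (4*(k/2)) β (-α) 0 else sv d (2*k+2) 1
def bF (k : ℕ) : F := if k % 2 = 1 then -1 else 1
def prI (k j : ℕ) : ℕ :=
  if j % 2 = 0 then (if j + 1 = k then 4*(j/2)+2 else 4*(j/2)) else 4*(j/2)+1
def probe (d k : ℕ) (j : ℕ) : Fin d → F := sv d (prI k j) 1
def eE (d k : ℕ) (i : ℕ) : Fin d → F := sv d (2*k+3+i) 1

variable {d k j j' i' : ℕ} {α β μ ν : F}

lemma dotp_disjoint_ranges {x y : Fin d → F} (a1 b1 a2 b2 : ℕ)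
    (hx : ∀ i : Fin d, (i : ℕ) < a1 ∨ b1 < (i : ℕ) → x i = 0)
    (hy : ∀ i : Fin d, (i : ℕ) < a2 ∨ b2 < (i : ℕ) → y i = 0)
    (h : b1 < a2 ∨ b2 < a1) : dotp x y = 0 :=
  dotp_disjoint fun i => by
    by_cases hi : (i : ℕ) < a2 ∨ b2 < (i : ℕ)
    · right; exact hy i hi
    · left; exact hx i (by omega)

/-- coarse support bound for `wV`: the 4-block. -/
lemma wV_supp : ∀ i : Fin d, (i : ℕ) < 4*(j/2) ∨ 4*(j/2) + 3 < (i : ℕ) → wV d k α β j i = 0 := by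
  intro i hi
  unfold wV
  by_cases h1 : j % 2 = 0
  · rw [if_pos h1]
    by_cases h2 : j + 1 = k
    · rw [if_pos h2]; exact tr3_supp (by omega)
    · rw [if_neg h2]; exact qd_supp (by omega)
  · rw [if_neg h1]; exact qd_supp (by omega)

/-- fine support bound for `wV`: everything below `2k + k%2`. -/
lemma wV_supp_hi (hj : j < k) :
    ∀ i : Fin d, (i : ℕ) < 0 ∨ 2*k + k % 2 - 1 < (i : ℕ) → wV d k α β j i = 0 := by
  intro i hi
  unfold wV
  by_cases h1 : j % 2 = 0
  · rw [if_pos h1]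
    by_cases h2 : j + 1 = k
    · rw [if_pos h2]; exact tr3_supp (by omega)
    · rw [if_neg h2]; exact qd_supp (by omega)
  · rw [if_neg h1]; exact qd_supp (by omega)

lemma vV_supp : ∀ i : Fin d, (i : ℕ) < 2*k + k % 2 ∨ 2*k + k % 2 + 1 < (i : ℕ) →
    vV d k μ ν i = 0 := by
  intro i hi; unfold vV; exact pr2_supp hi

lemma vV'_supp : ∀ i : Fin d, (i : ℕ) < 2*k + k % 2 ∨ 2*k + k % 2 + 1 < (i : ℕ) →
    vV' d k μ ν i = 0 := by
  intro i hi; unfold vV'; exact pr2_supp hi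

lemma pP_supp : ∀ i : Fin d, (i : ℕ) < 2*k - 2*(k % 2) ∨ 2*k + 2 < (i : ℕ) →
    pP d k α β i = 0 := by
  intro i hi
  unfold pP
  by_cases h1 : k % 2 = 1
  · rw [if_pos h1]; exact tr3_supp (by omega)
  · rw [if_neg h1]; exact sv_supp (by omega)

lemma probe_supp : ∀ i : Fin d, (i : ℕ) < prI k j ∨ prI k j < (i : ℕ) →
    probe d k j i = (0 : F) := by
  intro i hi
  unfold probe
  apply sv_supp
  omega

lemma prI_lt (hj : j < k) : prI k j ≤ 2*k ∧ 4*(j/2) ≤ prI k j ∧ prI k j ≤ 4*(j/2) + 2 := by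
  unfold prI
  split_ifs <;> omega

lemma eE_supp : ∀ i : Fin d, (i : ℕ) < 2*k+3+i' ∨ 2*k+3+i' < (i : ℕ) →
    eE d k i' i = (0 : F) := by
  intro i hi
  unfold eE
  apply sv_supp
  omega

end Vectors
section Ortho
open Finset
variable {F : Type} [Field F] {d k j j' i i' : ℕ} {α β μ ν : F}

-- A1-A3
lemma dotp_vV_vV (hd : 2*k+3 ≤ d) : dotp (vV d k μ ν) (vV d k μ ν) = μ^2 + ν^2 := by
  unfold vV; rw [dotp_pr2_pr2 (by omega)]; ring

lemma dotp_vV'_vV' (hd : 2*k+3 ≤ d) : dotp (vV' d k μ ν) (vV' d k μ ν) = μ^2 + ν^2 := by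
  unfold vV'; rw [dotp_pr2_pr2 (by omega)]; ring

lemma dotp_vV_vV' (hd : 2*k+3 ≤ d) : dotp (vV d k μ ν) (vV' d k μ ν) = 0 := by
  unfold vV vV'; rw [dotp_pr2_pr2 (by omega)]; ring

-- A4, A5
lemma dotp_vV_pP (hd : 2*k+3 ≤ d) (hk1 : 1 ≤ k) : dotp (vV d k μ ν) (pP d k α β) = 0 := by
  unfold vV pP
  by_cases h1 : k % 2 = 1
  · rw [if_pos h1]
    exact dotp_disjoint_ranges (2*k + k%2) (2*k + k%2+1) (4*(k/2)) (4*(k/2)+2)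
      (fun i hi => pr2_supp hi) (fun i hi => tr3_supp (by omega)) (by omega)
  · rw [if_neg h1]
    exact dotp_disjoint_ranges (2*k + k%2) (2*k + k%2+1) (2*k+2) (2*k+2)
      (fun i hi => pr2_supp hi) (fun i hi => sv_supp (by omega)) (by omega)

lemma dotp_vV'_pP (hd : 2*k+3 ≤ d) (hk1 : 1 ≤ k) : dotp (vV' d k μ ν) (pP d k α β) = 0 := by
  unfold vV' pP
  by_cases h1 : k % 2 = 1
  · rw [if_pos h1]
    exact dotp_disjoint_ranges (2*k + k%2) (2*k + k%2+1) (4*(k/2)) (4*(k/2)+2)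
      (fun i hi => pr2_supp hi) (fun i hi => tr3_supp (by omega)) (by omega)
  · rw [if_neg h1]
    exact dotp_disjoint_ranges (2*k + k%2) (2*k + k%2+1) (2*k+2) (2*k+2)
      (fun i hi => pr2_supp hi) (fun i hi => sv_supp (by omega)) (by omega)

-- A6
lemma dotp_pP_pP (hd : 2*k+3 ≤ d) (hk1 : 1 ≤ k) (hαβ : α^2 + β^2 = -1) :
    dotp (pP d k α β) (pP d k α β) = bF k := by
  unfold pP bF
  by_cases h1 : k % 2 = 1
  · rw [if_pos h1, if_pos h1, dotp_tr3_tr3 (by omega)]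
    linear_combination hαβ
  · rw [if_neg h1, if_neg h1, dotp_sv_sv, if_pos ⟨rfl, by omega⟩]
    ring

-- A7, A8
lemma dotp_vV_wV (hd : 2*k+3 ≤ d) (hk1 : 1 ≤ k) (hj : j < k) :
    dotp (vV d k μ ν) (wV d k α β j) = 0 := by
  unfold vV
  exact dotp_disjoint_ranges (2*k + k%2) (2*k + k%2+1) 0 (2*k + k%2 - 1)
    (fun i hi => pr2_supp hi) (wV_supp_hi hj) (by omega)

lemma dotp_vV'_wV (hd : 2*k+3 ≤ d) (hk1 : 1 ≤ k) (hj : j < k) :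
    dotp (vV' d k μ ν) (wV d k α β j) = 0 := by
  unfold vV'
  exact dotp_disjoint_ranges (2*k + k%2) (2*k + k%2+1) 0 (2*k + k%2 - 1)
    (fun i hi => pr2_supp hi) (wV_supp_hi hj) (by omega)

-- A9
lemma dotp_pP_wV (hd : 2*k+3 ≤ d) (hk1 : 1 ≤ k) (hj : j < k) :
    dotp (pP d k α β) (wV d k α β j) = 0 := by
  unfold pP
  by_cases h1 : k % 2 = 1
  · rw [if_pos h1]
    by_cases h2 : j + 1 = k
    · have hje : j % 2 = 0 := by omega
      have hb : j / 2 = k / 2 := by omega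
      unfold wV
      rw [if_pos hje, if_pos h2, hb, dotp_tr3_tr3 (by omega)]
      ring
    · refine dotp_disjoint_ranges (4*(k/2)) (4*(k/2)+2) (4*(j/2)) (4*(j/2)+3)
        (fun i hi => tr3_supp (by omega)) wV_supp ?_
      omega
  · rw [if_neg h1]
    exact dotp_disjoint_ranges (2*k+2) (2*k+2) 0 (2*k + k%2 - 1)
      (fun i hi => sv_supp (by omega)) (wV_supp_hi hj) (by omega)

-- A10
lemma dotp_wV_wV (hd : 2*k+3 ≤ d) (hj : j < k) (hj' : j' < k) (hαβ : α^2 + β^2 = -1) :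
    dotp (wV d k α β j) (wV d k α β j') = 0 := by
  by_cases hb : j / 2 = j' / 2
  · by_cases hje : j % 2 = 0
    · by_cases hj'e : j' % 2 = 0
      · -- both even: j = j'
        have hjj : j = j' := by omega
        subst hjj
        unfold wV
        rw [if_pos hje]
        by_cases h2 : j + 1 = k
        · rw [if_pos h2, dotp_tr3_tr3 (by omega)]
          linear_combination hαβ
        · rw [if_neg h2, dotp_qd_qd (by omega)]
          linear_combination hαβ
      · -- j even, j' = j+1 odd
        have h2 : ¬ (j + 1 = k) := by omega
        unfold wV
        rw [if_pos hje, if_neg h2, if_neg hj'e, hb, dotp_qd_qd (by omega)]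
        ring
    · by_cases hj'e : j' % 2 = 0
      · -- j odd, j' = j-1 even
        have h2 : ¬ (j' + 1 = k) := by omega
        unfold wV
        rw [if_neg hje, if_pos hj'e, if_neg h2, hb, dotp_qd_qd (by omega)]
        ring
      · -- both odd: j = j'
        have hjj : j = j' := by omega
        subst hjj
        unfold wV
        rw [if_neg hje, dotp_qd_qd (by omega)]
        linear_combination hαβ
  · exact dotp_disjoint_ranges (4*(j/2)) (4*(j/2)+3) (4*(j'/2)) (4*(j'/2)+3)
      wV_supp wV_supp (by omega)

-- A11-A14
lemma dotp_vV_eE (hd : 2*k+3 ≤ d) : dotp (vV d k μ ν) (eE d k i : Fin d → F) = 0 := by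
  unfold vV eE
  exact dotp_disjoint_ranges (2*k + k%2) (2*k + k%2+1) (2*k+3+i) (2*k+3+i)
    (fun i hi => pr2_supp hi) (fun i hi => sv_supp (by omega)) (by omega)

lemma dotp_vV'_eE (hd : 2*k+3 ≤ d) : dotp (vV' d k μ ν) (eE d k i : Fin d → F) = 0 := by
  unfold vV' eE
  exact dotp_disjoint_ranges (2*k + k%2) (2*k + k%2+1) (2*k+3+i) (2*k+3+i)
    (fun i hi => pr2_supp hi) (fun i hi => sv_supp (by omega)) (by omega)

lemma dotp_pP_eE (hd : 2*k+3 ≤ d) (hk1 : 1 ≤ k) : dotp (pP d k α β) (eE d k i : Fin d → F) = 0 := by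
  unfold eE
  exact dotp_disjoint_ranges (2*k - 2*(k%2)) (2*k+2) (2*k+3+i) (2*k+3+i)
    (pP_supp) (fun i hi => sv_supp (by omega)) (by omega)

lemma dotp_wV_eE (hd : 2*k+3 ≤ d) (hj : j < k) :
    dotp (wV d k α β j) (eE d k i : Fin d → F) = 0 := by
  unfold eE
  exact dotp_disjoint_ranges 0 (2*k + k%2 - 1) (2*k+3+i) (2*k+3+i)
    (wV_supp_hi hj) (fun i hi => sv_supp (by omega)) (by omega)

-- A15
lemma dotp_eE_eE (hi : 2*k+3+i < d) :
    dotp (eE d k i : Fin d → F) (eE d k i') = if i = i' then 1 else 0 := by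
  unfold eE
  rw [dotp_sv_sv]
  by_cases h : i = i'
  · subst h; rw [if_pos ⟨rfl, hi⟩, if_pos rfl]; ring
  · rw [if_neg (by omega), if_neg h]

-- A16-A18, A20
lemma dotp_vV_probe (hd : 2*k+3 ≤ d) (hk1 : 1 ≤ k) (hj : j < k) :
    dotp (vV d k μ ν) (probe d k j : Fin d → F) = 0 := by
  have hp := prI_lt (k := k) (j := j) hj
  unfold vV probe
  exact dotp_disjoint_ranges (2*k + k%2) (2*k + k%2+1) (prI k j) (prI k j)
    (fun i hi => pr2_supp hi) (fun i hi => sv_supp (by omega)) (by omega)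

lemma dotp_vV'_probe (hd : 2*k+3 ≤ d) (hk1 : 1 ≤ k) (hj : j < k) :
    dotp (vV' d k μ ν) (probe d k j : Fin d → F) = 0 := by
  have hp := prI_lt (k := k) (j := j) hj
  unfold vV' probe
  exact dotp_disjoint_ranges (2*k + k%2) (2*k + k%2+1) (prI k j) (prI k j)
    (fun i hi => pr2_supp hi) (fun i hi => sv_supp (by omega)) (by omega)

lemma dotp_eE_probe (hd : 2*k+3 ≤ d) (hj : j < k) :
    dotp (eE d k i : Fin d → F) (probe d k j) = 0 := by
  have hp := prI_lt (k := k) (j := j) hj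
  unfold eE probe
  rw [dotp_sv_sv, if_neg (by omega)]

lemma dotp_pP_probe (hd : 2*k+3 ≤ d) (hk1 : 1 ≤ k) (hj : j < k) :
    dotp (pP d k α β) (probe d k j : Fin d → F) = 0 := by
  have hp := prI_lt (k := k) (j := j) hj
  unfold pP probe
  by_cases h1 : k % 2 = 1
  · rw [if_pos h1]
    by_cases h2 : j + 1 = k
    · have hje : j % 2 = 0 := by omega
      have hpr : prI k j = 4*(k/2)+2 := by
        unfold prI; rw [if_pos hje, if_pos h2]; omega
      rw [hpr, dotp_tr3_sv2 (by omega)]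
      ring
    · refine dotp_disjoint_ranges (4*(k/2)) (4*(k/2)+2) (prI k j) (prI k j)
        (fun i hi => tr3_supp (by omega)) (fun i hi => sv_supp (by omega)) ?_
      have : prI k j ≤ 4*(j/2) + 2 := hp.2.2
      omega
  · rw [if_neg h1]
    rw [dotp_sv_sv, if_neg (by omega)]

-- A19
lemma dotp_wV_probe (hd : 2*k+3 ≤ d) (hj : j < k) (hj' : j' < k) :
    dotp (wV d k α β j) (probe d k j' : Fin d → F) = if j = j' then 1 else 0 := by
  have hp := prI_lt (k := k) (j := j') hj'
  by_cases hjj : j = j'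
  · subst hjj
    rw [if_pos rfl]
    unfold wV probe prI
    by_cases hje : j % 2 = 0
    · rw [if_pos hje, if_pos hje]
      by_cases h2 : j + 1 = k
      · rw [if_pos h2, if_pos h2, dotp_tr3_sv2 (by omega)]; ring
      · rw [if_neg h2, if_neg h2, dotp_qd_sv0 (by omega)]; ring
    · rw [if_neg hje, if_neg hje, dotp_qd_sv1 (by omega)]; ring
  · rw [if_neg hjj]
    by_cases hb : j / 2 = j' / 2
    · -- same block, different j: parities differ
      by_cases hje : j % 2 = 0
      · -- j even, j' = j+1 odd
        have hj'e : ¬ (j' % 2 = 0) := by omega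
        have h2 : ¬ (j + 1 = k) := by omega
        have hpr : prI k j' = 4*(j/2)+1 := by
          unfold prI; rw [if_neg hj'e]; omega
        unfold wV
        rw [if_pos hje, if_neg h2]
        unfold probe
        rw [hpr, dotp_qd_sv1 (by omega)]
        ring
      · -- j odd, j' even
        have hj'e : j' % 2 = 0 := by omega
        have h2 : ¬ (j' + 1 = k) := by omega
        have hpr : prI k j' = 4*(j/2) := by
          unfold prI; rw [if_pos hj'e, if_neg h2]; omega
        unfold wV
        rw [if_neg hje]
        unfold probe
        rw [hpr, dotp_qd_sv0 (by omega)]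
        ring
    · refine dotp_disjoint_ranges (4*(j/2)) (4*(j/2)+3) (prI k j') (prI k j')
        wV_supp (fun i hi => ?_) (by omega)
      unfold probe
      exact sv_supp (by omega)
end Ortho
section Gamma
open Finset
variable {F : Type} [Field F]

def Gam (d k : ℕ) (α β μ ν : F) (ξ κ σ : F) (dc : Fin k → F) (z : Fin (d - (2*k+3)) → F) :
    Fin d → F :=
  ξ • vV d k μ ν + κ • vV' d k μ ν + σ • pP d k α β
    + (∑ j : Fin k, dc j • wV d k α β (j : ℕ))
    + (∑ i : Fin (d - (2*k+3)), z i • (eE d k (i : ℕ) : Fin d → F))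

variable {d k : ℕ} {α β μ ν ξ κ σ : F} {dc : Fin k → F} {z : Fin (d - (2*k+3)) → F}

lemma dotp_Gam_left (T : Fin d → F) :
    dotp (Gam d k α β μ ν ξ κ σ dc z) T
    = ξ * dotp (vV d k μ ν) T + κ * dotp (vV' d k μ ν) T + σ * dotp (pP d k α β) T
      + (∑ j : Fin k, dc j * dotp (wV d k α β (j : ℕ)) T)
      + (∑ i : Fin (d - (2*k+3)), z i * dotp (eE d k (i : ℕ) : Fin d → F) T) := by
  unfold Gam
  simp only [dotp_add_left, dotp_sum_left, dotp_smul_left]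

lemma dotp_Gam_vV (hd : 2*k+3 ≤ d) (hk1 : 1 ≤ k) :
    dotp (Gam d k α β μ ν ξ κ σ dc z) (vV d k μ ν) = ξ * (μ^2 + ν^2) := by
  rw [dotp_Gam_left, dotp_vV_vV hd]
  rw [dotp_comm (vV' d k μ ν) (vV d k μ ν), dotp_vV_vV' hd]
  rw [dotp_comm (pP d k α β) (vV d k μ ν), dotp_vV_pP hd hk1]
  rw [Finset.sum_eq_zero (fun j _ => by
    rw [dotp_comm, dotp_vV_wV hd hk1 j.2, mul_zero])]
  rw [Finset.sum_eq_zero (fun i _ => by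
    rw [dotp_comm, dotp_vV_eE hd, mul_zero])]
  ring

lemma dotp_Gam_vV' (hd : 2*k+3 ≤ d) (hk1 : 1 ≤ k) :
    dotp (Gam d k α β μ ν ξ κ σ dc z) (vV' d k μ ν) = κ * (μ^2 + ν^2) := by
  rw [dotp_Gam_left, dotp_vV_vV' hd, dotp_vV'_vV' hd]
  rw [dotp_comm (pP d k α β) (vV' d k μ ν), dotp_vV'_pP hd hk1]
  rw [Finset.sum_eq_zero (fun j _ => by
    rw [dotp_comm, dotp_vV'_wV hd hk1 j.2, mul_zero])]
  rw [Finset.sum_eq_zero (fun i _ => by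
    rw [dotp_comm, dotp_vV'_eE hd, mul_zero])]
  ring

lemma dotp_Gam_pP (hd : 2*k+3 ≤ d) (hk1 : 1 ≤ k) (hαβ : α^2 + β^2 = -1) :
    dotp (Gam d k α β μ ν ξ κ σ dc z) (pP d k α β) = σ * bF k := by
  rw [dotp_Gam_left, dotp_vV_pP hd hk1, dotp_vV'_pP hd hk1, dotp_pP_pP hd hk1 hαβ]
  rw [Finset.sum_eq_zero (fun j _ => by
    rw [dotp_comm, dotp_pP_wV hd hk1 j.2, mul_zero])]
  rw [Finset.sum_eq_zero (fun i _ => by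
    rw [dotp_comm, dotp_pP_eE hd hk1, mul_zero])]
  ring

lemma dotp_Gam_wV (hd : 2*k+3 ≤ d) (hk1 : 1 ≤ k) (hαβ : α^2 + β^2 = -1)
    {j : ℕ} (hj : j < k) :
    dotp (Gam d k α β μ ν ξ κ σ dc z) (wV d k α β j) = 0 := by
  rw [dotp_Gam_left, dotp_vV_wV hd hk1 hj, dotp_vV'_wV hd hk1 hj, dotp_pP_wV hd hk1 hj]
  rw [Finset.sum_eq_zero (fun j' _ => by
    rw [dotp_wV_wV hd j'.2 hj hαβ, mul_zero])]
  rw [Finset.sum_eq_zero (fun i _ => by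
    rw [dotp_comm, dotp_wV_eE hd hj, mul_zero])]
  ring

lemma dotp_Gam_eE (hd : 2*k+3 ≤ d) (hk1 : 1 ≤ k) (iF : Fin (d - (2*k+3))) :
    dotp (Gam d k α β μ ν ξ κ σ dc z) (eE d k (iF : ℕ)) = z iF := by
  rw [dotp_Gam_left, dotp_vV_eE hd, dotp_vV'_eE hd, dotp_pP_eE hd hk1]
  rw [Finset.sum_eq_zero (fun j _ => by
    rw [dotp_wV_eE hd j.2, mul_zero])]
  have hterm : ∀ i' : Fin (d - (2*k+3)), i' ∈ (univ : Finset (Fin (d - (2*k+3)))) →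
      z i' * dotp (eE d k (i' : ℕ) : Fin d → F) (eE d k (iF : ℕ))
      = if i' = iF then z i' else 0 := by
    intro i' _
    rw [dotp_eE_eE (by omega)]
    by_cases h : i' = iF
    · subst h; rw [if_pos rfl, if_pos rfl, mul_one]
    · rw [if_neg (fun hc => h (Fin.ext hc)), if_neg h, mul_zero]
  rw [Finset.sum_congr rfl hterm, Finset.sum_ite_eq' univ iF, if_pos (mem_univ iF)]
  ring

lemma dotp_Gam_probe (hd : 2*k+3 ≤ d) (hk1 : 1 ≤ k) (jF : Fin k) :
    dotp (Gam d k α β μ ν ξ κ σ dc z) (probe d k (jF : ℕ)) = dc jF := by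
  rw [dotp_Gam_left, dotp_vV_probe hd hk1 jF.2, dotp_vV'_probe hd hk1 jF.2,
    dotp_pP_probe hd hk1 jF.2]
  have hterm : ∀ j' : Fin k, j' ∈ (univ : Finset (Fin k)) →
      dc j' * dotp (wV d k α β (j' : ℕ)) (probe d k (jF : ℕ) : Fin d → F)
      = if j' = jF then dc j' else 0 := by
    intro j' _
    rw [dotp_wV_probe hd j'.2 jF.2]
    by_cases h : j' = jF
    · subst h; rw [if_pos rfl, if_pos rfl, mul_one]
    · rw [if_neg (fun hc => h (Fin.ext hc)), if_neg h, mul_zero]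
  rw [Finset.sum_congr rfl hterm, Finset.sum_ite_eq' univ jF, if_pos (mem_univ jF)]
  rw [Finset.sum_eq_zero (fun i _ => by
    rw [dotp_eE_probe hd jF.2, mul_zero])]
  ring

lemma fnorm_Gam (hd : 2*k+3 ≤ d) (hk1 : 1 ≤ k) (hαβ : α^2 + β^2 = -1) :
    fnorm (Gam d k α β μ ν ξ κ σ dc z)
    = (μ^2 + ν^2) * (ξ^2 + κ^2) + bF k * σ^2
      + ∑ i : Fin (d - (2*k+3)), (z i)^2 := by
  rw [fnorm_eq_dotp, dotp_Gam_left]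
  rw [dotp_comm (vV d k μ ν) _, dotp_Gam_vV hd hk1]
  rw [dotp_comm (vV' d k μ ν) _, dotp_Gam_vV' hd hk1]
  rw [dotp_comm (pP d k α β) _, dotp_Gam_pP hd hk1 hαβ]
  have hw : ∀ j ∈ (univ : Finset (Fin k)),
      dc j * dotp (wV d k α β (j : ℕ)) (Gam d k α β μ ν ξ κ σ dc z) = 0 := by
    intro j _
    rw [dotp_comm, dotp_Gam_wV hd hk1 hαβ j.2, mul_zero]
  have hz : ∀ i ∈ (univ : Finset (Fin (d - (2*k+3)))),
      z i * dotp (eE d k (i : ℕ) : Fin d → F) (Gam d k α β μ ν ξ κ σ dc z) = (z i)^2 := by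
    intro i _
    rw [dotp_comm, dotp_Gam_eE hd hk1 i]
    ring
  rw [Finset.sum_congr rfl hw, Finset.sum_congr rfl hz, Finset.sum_const_zero]
  ring

lemma Gam_sub {ξ' κ' σ' : F} {dc' : Fin k → F} {z' : Fin (d - (2*k+3)) → F} :
    Gam d k α β μ ν ξ κ σ dc z - Gam d k α β μ ν ξ' κ' σ' dc' z'
    = Gam d k α β μ ν (ξ-ξ') (κ-κ') (σ-σ') (dc-dc') (z-z') := by
  unfold Gam
  simp only [sub_smul, Pi.sub_apply, Finset.sum_sub_distrib]
  abel

end Gamma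
section Counting
open Finset
variable {F : Type} [Field F] [Fintype F] [DecidableEq F]

lemma filter_snd_card {A B : Type} [Fintype A] [Fintype B]
    (cond : B → Prop) [DecidablePred cond] :
    ((univ : Finset (A × B)).filter (fun p => cond p.2)).card
      = Fintype.card A * ((univ : Finset B).filter cond).card := by
  have h : (univ : Finset (A × B)).filter (fun p => cond p.2)
      = (univ : Finset A) ×ˢ ((univ : Finset B).filter cond) := by
    ext p
    simp [Finset.mem_product]
  rw [h, Finset.card_product, Finset.card_univ]

lemma card_filter_prod_ge {A B : Type} [Fintype A] [Fintype B] [DecidableEq B]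
    (P : A → B → Prop) [∀ a b, Decidable (P a b)] (n : ℕ)
    (h : ∀ b : B, n ≤ ((univ : Finset A).filter (fun a : A => P a b)).card) :
    Fintype.card B * n ≤ ((univ : Finset (A × B)).filter (fun p => P p.1 p.2)).card := by
  rw [Finset.card_eq_sum_card_fiberwise (f := Prod.snd) (t := univ)
    (fun x _ => mem_univ _)]
  have hfib : ∀ b : B, (((univ : Finset (A × B)).filter (fun p => P p.1 p.2)).filter
      (fun p => p.snd = b)).card = ((univ : Finset A).filter (fun a : A => P a b)).card := by
    intro b
    apply Finset.card_nbij' (i := fun p => p.1) (j := fun a => (a, b))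
    · intro p hp
      simp only [mem_coe, mem_filter, mem_univ, true_and] at hp ⊢
      rw [← hp.2]; exact hp.1
    · intro a ha
      simp only [mem_coe, mem_filter, mem_univ, true_and] at ha ⊢
      simp [ha]
    · intro p hp
      simp only [mem_coe, mem_filter] at hp
      rw [← hp.2]
    · intro a _
      rfl
  calc Fintype.card B * n = ∑ _b : B, n := by
        rw [Finset.sum_const, card_univ, smul_eq_mul, mul_comm]
    _ ≤ _ := Finset.sum_le_sum fun b _ => by rw [hfib b]; exact h b

/-- the per-fibre pair count. -/
lemma card_pairs_ge (hF : ringChar F ≠ 2) (r b C : F) (hr : r ≠ 0) (hb : b ≠ 0)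
    (M : ℕ) (hM : M = ((univ : Finset F).filter fun u : F => ¬ IsSquare u).card) :
    (M - 1) * (Fintype.card F - 1) + 1
      ≤ ((univ : Finset (F × F)).filter
          (fun w : F × F => ¬ IsSquare (r * (r - (r * w.1^2 + b * w.2^2 + C))))).card := by
  classical
  set q := Fintype.card F with hq
  have hq2 : 2 ≤ q := Fintype.one_lt_card
  set T : Finset F := (univ : Finset F).filter (fun t : F => ¬ IsSquare (r * (r - (t + C))))
    with hT
  have hTcard : T.card = M := by
    rw [hM]
    apply Finset.card_nbij' (i := fun t => r * (r - (t + C)))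
      (j := fun u => r - u * r⁻¹ - C)
    · intro t ht
      simp only [hT, mem_coe, mem_filter, mem_univ, true_and] at ht ⊢
      exact ht
    · intro u hu
      simp only [hT, mem_coe, mem_filter, mem_univ, true_and] at hu ⊢
      have : r * (r - (r - u * r⁻¹ - C + C)) = u := by
        first
          | (field_simp; ring)
          | field_simp
      rw [this]
      exact hu
    · intro t _
      first
        | (field_simp; ring)
        | field_simp
    · intro u _
      first
        | (field_simp; ring)
        | field_simp
  -- fibre decomposition over the value of the quadratic form
  have hmaps : ∀ w ∈ (univ : Finset (F × F)).filter
      (fun w : F × F => ¬ IsSquare (r * (r - (r * w.1^2 + b * w.2^2 + C)))),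
      (r * w.1^2 + b * w.2^2) ∈ T := by
    intro w hw
    simp only [mem_filter, mem_univ, true_and] at hw
    simp only [hT, mem_filter, mem_univ, true_and]
    exact hw
  rw [Finset.card_eq_sum_card_fiberwise hmaps]
  have hMpos : 1 ≤ M := by
    have hns := FiniteField.exists_nonsquare (F := F) hF
    obtain ⟨u, hu⟩ := hns
    have : u ∈ (univ : Finset F).filter fun u : F => ¬ IsSquare u := by
      simp [hu]
    rw [hM]
    exact Finset.card_pos.mpr ⟨u, this⟩
  have hbound : ∀ t ∈ T,
      (if t = 0 then 1 else q - 1)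
        ≤ (((univ : Finset (F × F)).filter
          (fun w : F × F => ¬ IsSquare (r * (r - (r * w.1^2 + b * w.2^2 + C))))).filter
          (fun w => r * w.1^2 + b * w.2^2 = t)).card := by
    intro t ht
    have hfil : (((univ : Finset (F × F)).filter
        (fun w : F × F => ¬ IsSquare (r * (r - (r * w.1^2 + b * w.2^2 + C))))).filter
        (fun w => r * w.1^2 + b * w.2^2 = t))
        = (univ : Finset (F × F)).filter (fun w => r * w.1^2 + b * w.2^2 = t) := by
      ext w
      simp only [mem_filter, mem_univ, true_and]
      constructor
      · exact fun h => h.2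
      · intro h
        refine ⟨?_, h⟩
        rw [h]
        simpa only [hT, mem_filter, mem_univ, true_and] using ht
    rw [hfil]
    by_cases ht0 : t = 0
    · rw [if_pos ht0]
      refine Finset.card_pos.mpr ⟨(0, 0), ?_⟩
      simp [ht0]
    · rw [if_neg ht0]
      have := card_quadric hF r b t hr hb ht0
      have hcast : (q : ℤ) - 1
          ≤ (((univ : Finset (F × F)).filter
            (fun w : F × F => r * w.1^2 + b * w.2^2 = t)).card : ℤ) := by
        convert this using 3
      omega
  calc (M - 1) * (q - 1) + 1 ≤ ∑ t ∈ T, (if t = 0 then 1 else q - 1) := by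
        by_cases h0 : (0 : F) ∈ T
        · rw [← Finset.add_sum_erase _ _ h0, if_pos rfl]
          have : ∀ t ∈ T.erase 0, (if t = 0 then 1 else q - 1) = q - 1 := by
            intro t ht
            rw [if_neg (Finset.mem_erase.mp ht).1]
          rw [Finset.sum_congr rfl this, Finset.sum_const, smul_eq_mul,
            Finset.card_erase_of_mem h0, hTcard]
          omega
        · have : ∀ t ∈ T, (if t = 0 then 1 else q - 1) = q - 1 := by
            intro t ht
            rw [if_neg]
            intro h; rw [h] at ht; exact h0 ht
          rw [Finset.sum_congr rfl this, Finset.sum_const, smul_eq_mul, hTcard]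
          have h1 : (M - 1) * (q - 1) + 1 ≤ (M - 1) * (q - 1) + (q - 1) := by omega
          have h2 : (M - 1) * (q - 1) + (q - 1) = M * (q - 1) := by
            have hM1 : M - 1 + 1 = M := by omega
            calc (M - 1) * (q - 1) + (q - 1) = (M - 1 + 1) * (q - 1) := by ring
              _ = M * (q - 1) := by rw [hM1]
          omega
    _ ≤ _ := Finset.sum_le_sum hbound

end Counting

section Counting2
open Finset
variable {F : Type} [Field F] [Fintype F] [DecidableEq F]

set_option maxHeartbeats 1000000 in
lemma X_count (hF : ringChar F ≠ 2) (K m : ℕ) (r b : F) (hr : r ≠ 0) (hb : b ≠ 0)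
    (M : ℕ) (hM : M = ((univ : Finset F).filter fun u : F => ¬ IsSquare u).card) :
    Fintype.card F ^ (K+1) * (Fintype.card F ^ m * ((M-1) * (Fintype.card F - 1) + 1))
      ≤ (((univ : Finset ((F × (Fin K → F)) × (F × F) × (Fin m → F))).filter
          (fun p => ¬ IsSquare (r * (r - (r * p.2.1.1^2 + b * p.2.1.2^2
            + ∑ i, (p.2.2 i)^2))))).card) := by
  have hsplit : (((univ : Finset ((F × (Fin K → F)) × (F × F) × (Fin m → F))).filter
      (fun p => ¬ IsSquare (r * (r - (r * p.2.1.1^2 + b * p.2.1.2^2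
        + ∑ i, (p.2.2 i)^2))))).card)
      = Fintype.card (F × (Fin K → F))
        * (((univ : Finset ((F × F) × (Fin m → F))).filter
          (fun w => ¬ IsSquare (r * (r - (r * w.1.1^2 + b * w.1.2^2
            + ∑ i, (w.2 i)^2))))).card) :=
    filter_snd_card (fun w : (F × F) × (Fin m → F) =>
      ¬ IsSquare (r * (r - (r * w.1.1^2 + b * w.1.2^2 + ∑ i, (w.2 i)^2))))
  have hlow : Fintype.card (Fin m → F) * ((M - 1) * (Fintype.card F - 1) + 1)
      ≤ (((univ : Finset ((F × F) × (Fin m → F))).filter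
          (fun w => ¬ IsSquare (r * (r - (r * w.1.1^2 + b * w.1.2^2
            + ∑ i, (w.2 i)^2))))).card) := by
    apply card_filter_prod_ge
      (P := fun (a : F × F) (z : Fin m → F) =>
        ¬ IsSquare (r * (r - (r * a.1^2 + b * a.2^2 + ∑ i, (z i)^2))))
    intro z
    exact card_pairs_ge hF r b (∑ i, (z i)^2) hr hb M hM
  have hc1 : Fintype.card (F × (Fin K → F)) = Fintype.card F ^ (K+1) := by
    rw [Fintype.card_prod, Fintype.card_fun, Fintype.card_fin, pow_succ, mul_comm]
  have hc2 : Fintype.card (Fin m → F) = Fintype.card F ^ m := by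
    rw [Fintype.card_fun, Fintype.card_fin]
  rw [hsplit, hc1]
  rw [hc1] at hsplit
  rw [hc2] at hlow
  exact Nat.mul_le_mul_left _ hlow

end Counting2
section Inj
open Finset
variable {F : Type} [Field F] {d k : ℕ} {α β μ ν : F}

lemma Gam_injective (hd : 2*k+3 ≤ d) (hk1 : 1 ≤ k) (hαβ : α^2 + β^2 = -1)
    (hμν : μ^2 + ν^2 ≠ 0) (hbF : bF k ≠ (0 : F))
    {ξ κ σ ξ' κ' σ' : F} {dc dc' : Fin k → F} {z z' : Fin (d - (2*k+3)) → F}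
    (h : Gam d k α β μ ν ξ κ σ dc z = Gam d k α β μ ν ξ' κ' σ' dc' z') :
    ξ = ξ' ∧ κ = κ' ∧ σ = σ' ∧ dc = dc' ∧ z = z' := by
  refine ⟨?_, ?_, ?_, ?_, ?_⟩
  · have hv := congrArg (fun x => dotp x (vV d k μ ν)) h
    simp only [dotp_Gam_vV hd hk1] at hv
    exact mul_right_cancel₀ hμν hv
  · have hv := congrArg (fun x => dotp x (vV' d k μ ν)) h
    simp only [dotp_Gam_vV' hd hk1] at hv
    exact mul_right_cancel₀ hμν hv
  · have hv := congrArg (fun x => dotp x (pP d k α β)) h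
    simp only [dotp_Gam_pP hd hk1 hαβ] at hv
    exact mul_right_cancel₀ hbF hv
  · funext j
    have hv := congrArg (fun x => dotp x (probe d k (j : ℕ) : Fin d → F)) h
    simp only [dotp_Gam_probe hd hk1] at hv
    exact hv
  · funext i
    have hv := congrArg (fun x => dotp x (eE d k (i : ℕ) : Fin d → F)) h
    simp only [dotp_Gam_eE hd hk1] at hv
    exact hv

end Inj


set_option maxHeartbeats 1000000 in

/-- **Proposition (avoiding a distance between two large sets).**
For odd `d ≥ 3` and `1 ≤ k < (d−1)/2` there is `c > 0` such that for every odd prime power `q`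
and every `r ∈ 𝔽_q^*` there are `X, Y ⊆ 𝔽_q^d` with `|X| ≥ c·q^(d−k)`, `|Y| = q^(k+1) − q^k`,
and no pair of `X × Y` at distance `r`. -/
theorem zero_distance_construction (d k : ℕ) (hd : 3 ≤ d) (hdo : Odd d)
    (hk : 1 ≤ k) (hk' : k < (d - 1) / 2) :
    ∃ c : ℝ, 0 < c ∧
      ∀ (q : ℕ), Odd q → IsPrimePow q →
      ∀ (F : Type) [Field F] [Fintype F] [DecidableEq F], Fintype.card F = q →
      ∀ r : F, r ≠ 0 →
      ∃ X Y : Finset (Fin d → F),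
        c * (q : ℝ) ^ (d - k) ≤ (X.card : ℝ) ∧
        Y.card = q ^ (k + 1) - q ^ k ∧
        ∀ x ∈ X, ∀ y ∈ Y, fnorm (x - y) ≠ r := by
  refine ⟨1/9, by norm_num, ?_⟩
  intro q hq hpp F _ _ _ hcard r hr
  have hd2 : 2*k+3 ≤ d := by
    obtain ⟨l, hl⟩ := hdo
    omega
  have hchar : ringChar F ≠ 2 := by
    intro h2
    obtain ⟨n, hpn, hc⟩ := FiniteField.card F (ringChar F)
    rw [h2, hcard] at hc
    have h2dvd : 2 ∣ q := hc ▸ dvd_pow_self 2 (by exact_mod_cast n.pos.ne')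
    rw [Nat.odd_iff] at hq
    omega
  have hq2 : 2 ≤ q := by rw [← hcard]; exact Fintype.one_lt_card
  have hq3 : 3 ≤ q := by rw [Nat.odd_iff] at hq; omega
  obtain ⟨α, β, hαβ⟩ := exists_sq_add_sq' (F := F) hchar (-1) (by simp)
  obtain ⟨μ, ν, hμν⟩ := exists_sq_add_sq' (F := F) hchar r hr
  have hμν0 : μ^2 + ν^2 ≠ 0 := by rw [hμν]; exact hr
  have hbF : bF k ≠ (0 : F) := by
    unfold bF
    split_ifs
    · exact neg_ne_zero.mpr one_ne_zero
    · exact one_ne_zero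
  obtain ⟨M, hM⟩ : ∃ M : ℕ, M = ((univ : Finset F).filter fun u : F => ¬ IsSquare u).card :=
    ⟨_, rfl⟩
  have h2M : 2 * M = q - 1 := by rw [hM, two_mul_card_nonsquares hchar, hcard]
  have hMpos : 1 ≤ M := by omega
  have hΦinj : Function.Injective
      (fun p : (F × (Fin k → F)) × (F × F) × (Fin (d - (2*k+3)) → F) =>
        Gam d k α β μ ν p.1.1 p.2.1.1 p.2.1.2 p.1.2 p.2.2) := by
    rintro ⟨⟨ξ, dc⟩, ⟨κ, σ⟩, z⟩ ⟨⟨ξ', dc'⟩, ⟨κ', σ'⟩, z'⟩ h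
    simp only at h
    obtain ⟨h1, h2, h3, h4, h5⟩ := Gam_injective hd2 hk hαβ hμν0 hbF h
    simp_all
  have hΨinj : Function.Injective
      (fun p : F × (Fin k → F) => Gam d k α β μ ν p.1 0 0 p.2 0) := by
    rintro ⟨a, c⟩ ⟨a', c'⟩ h
    simp only at h
    obtain ⟨h1, h2, h3, h4, h5⟩ := Gam_injective hd2 hk hαβ hμν0 hbF h
    simp_all
  refine ⟨((univ : Finset ((F × (Fin k → F)) × (F × F) × (Fin (d - (2*k+3)) → F))).filter
      (fun p => ¬ IsSquare (r * (r - (r * p.2.1.1^2 + bF k * p.2.1.2^2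
        + ∑ i, (p.2.2 i)^2))))).image
      (fun p : (F × (Fin k → F)) × (F × F) × (Fin (d - (2*k+3)) → F) =>
        Gam d k α β μ ν p.1.1 p.2.1.1 p.2.1.2 p.1.2 p.2.2),
    (((univ : Finset F).erase 0) ×ˢ (univ : Finset (Fin k → F))).image
      (fun p : F × (Fin k → F) => Gam d k α β μ ν p.1 0 0 p.2 0), ?_, ?_, ?_⟩
  · -- cardinality of X
    rw [Finset.card_image_of_injective _ hΦinj]
    have hcount := X_count hchar k (d - (2*k+3)) r (bF k) hr hbF M hM
    rw [hcard] at hcount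
    have hbeta : q^2 ≤ 9 * ((M - 1) * (q - 1) + 1) := by
      obtain ⟨M', rfl⟩ : ∃ M', M = M' + 1 := ⟨M - 1, by omega⟩
      have hqM : q = 2 * M' + 3 := by omega
      have hq1 : q - 1 = 2 * M' + 2 := by omega
      have h2 : M' + 1 - 1 = M' := by omega
      rw [h2, hq1, hqM]
      nlinarith [sq_nonneg M']
    have hexp : d - k = (k+1) + (d - (2*k+3)) + 2 := by omega
    have hnat : q^(d-k) ≤ 9 * (q^(k+1) * (q^(d - (2*k+3))
        * ((M - 1) * (q - 1) + 1))) := by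
      calc q^(d-k) = q^(k+1) * q^(d - (2*k+3)) * q^2 := by
            rw [hexp, pow_add, pow_add]
        _ ≤ q^(k+1) * q^(d - (2*k+3)) * (9 * ((M - 1) * (q - 1) + 1)) :=
            Nat.mul_le_mul_left _ hbeta
        _ = 9 * (q^(k+1) * (q^(d - (2*k+3)) * ((M - 1) * (q - 1) + 1))) := by ring
    have hfin : q^(d-k) ≤ 9 * (((univ : Finset ((F × (Fin k → F)) × (F × F)
        × (Fin (d - (2*k+3)) → F))).filter
        (fun p => ¬ IsSquare (r * (r - (r * p.2.1.1^2 + bF k * p.2.1.2^2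
          + ∑ i, (p.2.2 i)^2))))).card) := by
      omega
    have hreal : ((q:ℝ))^(d-k) ≤ 9 * ((((univ : Finset ((F × (Fin k → F)) × (F × F)
        × (Fin (d - (2*k+3)) → F))).filter
        (fun p => ¬ IsSquare (r * (r - (r * p.2.1.1^2 + bF k * p.2.1.2^2
          + ∑ i, (p.2.2 i)^2))))).card : ℕ) : ℝ) := by
      exact_mod_cast hfin
    push_cast at hreal ⊢
    linarith
  · -- cardinality of Y
    rw [Finset.card_image_of_injective _ hΨinj, Finset.card_product,
      Finset.card_erase_of_mem (mem_univ 0), Finset.card_univ, Finset.card_univ,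
      Fintype.card_fun, Fintype.card_fin, hcard]
    have hpow : q^(k+1) = q * q^k := by rw [pow_succ]; ring
    calc (q - 1) * q^k = q * q^k - 1 * q^k := Nat.sub_mul q 1 (q^k)
      _ = q^(k+1) - q^k := by rw [one_mul, hpow]
  · -- avoidance
    intro x hx y hy
    obtain ⟨p, hp, rfl⟩ := Finset.mem_image.mp hx
    obtain ⟨ac, hac, rfl⟩ := Finset.mem_image.mp hy
    obtain ⟨⟨ξ, dc⟩, ⟨κ, σ⟩, z⟩ := p
    obtain ⟨a, c⟩ := ac
    rw [Finset.mem_filter] at hp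
    have hcond := hp.2
    simp only at hcond ⊢
    intro hEq
    apply hcond
    rw [Gam_sub] at hEq
    simp only [sub_zero] at hEq
    rw [fnorm_Gam hd2 hk hαβ, hμν] at hEq
    exact ⟨r * (ξ - a), by linear_combination (-r) * hEq⟩
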